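/- arXiv:2508.05278 — 2 statements merged into one kernel-verified Lean document; each statement's English description precedes it below -/
import Mathlib

section
/- Let A be an n×n real symmetric matrix with eigenvalues (λ_i)_{i∈Fin n} given by the spectral theorem, and let s be a subset of the index set Fin n with |s| = k. Then there exists an n×n real matrix B with rank(B) ≤ k such that the squared Frobenius distance satisfies Σ_{i,j} (A − B)_{ij}² = Σ_{i ∉ s} λ_i². -/
open Matrix

/-- Eigenvalue truncation: for a real symmetric matrix `A` with eigenvalues `λ_i`
and any index set `s` of cardinality `k`, there is a matrix `B` of rank at most `k`
whose squared Frobenius distance to `A` is `∑_{i ∉ s} λ_i²`. -/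
theorem stmt_6 (n k : ℕ) (A : Matrix (Fin n) (Fin n) ℝ) (hA : A.IsHermitian)
    (s : Finset (Fin n)) (hs : s.card = k) :
    ∃ B : Matrix (Fin n) (Fin n) ℝ, B.rank ≤ k ∧
      (∑ i, ∑ j, ((A - B) i j) ^ 2) = ∑ i ∈ sᶜ, (hA.eigenvalues i) ^ 2 := by
  set U : Matrix (Fin n) (Fin n) ℝ := ↑hA.eigenvectorUnitary with hU
  have hUU : star U * U = 1 := Unitary.coe_star_mul_self hA.eigenvectorUnitary
  set d : Fin n → ℝ := hA.eigenvalues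
  set e : Fin n → ℝ := fun i => if i ∈ s then 0 else d i with he
  refine ⟨U * diagonal (fun i => if i ∈ s then d i else 0) * star U, ?_, ?_⟩
  · calc (U * diagonal (fun i => if i ∈ s then d i else 0) * star U).rank
        ≤ (diagonal (fun i => if i ∈ s then d i else 0)).rank :=
          le_trans (rank_mul_le_left _ _) (rank_mul_le_right _ _)
      _ ≤ k := by
        rw [rank_diagonal, ← hs]
        have hsub : (Finset.univ.filter fun i => (if i ∈ s then d i else 0) ≠ 0) ⊆ s := by
          intro i hi
          simp only [Finset.mem_filter] at hi
          by_contra h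
          simp [h] at hi
        calc Fintype.card {i // (if i ∈ s then d i else 0) ≠ 0}
            = (Finset.univ.filter fun i => (if i ∈ s then d i else 0) ≠ 0).card :=
              Fintype.card_subtype _
          _ ≤ s.card := Finset.card_le_card hsub
  · have hdd : (RCLike.ofReal ∘ hA.eigenvalues : Fin n → ℝ) = d := by funext i; simp [d]
    have hAB : A - U * diagonal (fun i => if i ∈ s then d i else 0) * star U
        = U * diagonal e * star U := by
      conv_lhs => rw [hA.spectral_theorem]
      rw [hdd, Unitary.conjStarAlgAut_apply, ← hU, ← sub_mul, ← mul_sub, diagonal_sub]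
      congr 2
      funext i
      funext j
      by_cases hi : i ∈ s <;> simp [diagonal, he, hi, of_apply]
    rw [hAB]
    set M := U * diagonal e * star U with hM
    have key : ∑ i, ∑ j, (M i j)^2 = trace (Mᵀ * M) := by
      rw [trace]
      simp only [diag_apply, mul_apply, transpose_apply]
      rw [Finset.sum_comm]
      simp [pow_two]
    rw [key]
    have hsU : star U = Uᵀ := by
      ext i j; simp [star, conjTranspose, Matrix.conjTranspose_apply]
    have hMT : Mᵀ = U * diagonal e * star U := by
      rw [hM, hsU]
      simp [transpose_mul, diagonal_transpose, mul_assoc]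
    rw [hMT, hM]
    have hprod : (U * diagonal e * star U) * (U * diagonal e * star U)
        = U * (diagonal e * diagonal e) * star U := by
      rw [mul_assoc (U * diagonal e) (star U) (U * diagonal e * star U),
        ← mul_assoc (star U) (U * diagonal e) (star U),
        ← mul_assoc (star U) U (diagonal e), hUU, one_mul,
        ← mul_assoc, mul_assoc U]
    rw [hprod, trace_mul_cycle, ← mul_assoc, hUU, one_mul, diagonal_mul_diagonal,
      trace_diagonal]
    rw [← Finset.sum_add_sum_compl s (fun i => e i * e i),
      Finset.sum_eq_zero (fun i hi => by simp [he, hi]), zero_add]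
    exact Finset.sum_congr rfl (fun i hi => by simp [he, Finset.mem_compl.mp hi, pow_two])
end

section
/- Let K be an n×n real positive semidefinite matrix, λ > 0, Σ = λ·K + Iₙ, X an n×p real matrix, and y ∈ ℝⁿ; assume G = Xᵀ Σ⁻¹ X is invertible and let β̂ = G⁻¹ Xᵀ Σ⁻¹ y. Let (K_m)_{m∈ℕ} be a sequence of n×n real positive semidefinite matrices converging entrywise to K, set Σ_m = λ·K_m + Iₙ, and (for m large enough that G_m = Xᵀ Σ_m⁻¹ X is invertible) β̃_m = G_m⁻¹ Xᵀ Σ_m⁻¹ y. Define D_m = (1/2)·( trace(Σ⁻¹ Σ_m) − n + (X β̂ − X β̃_m)ᵀ Σ⁻¹ (X β̂ − X β̃_m) + log(det Σ) − log(det Σ_m) ). Then D_m → 0 as m → ∞. -/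
open Matrix Filter Topology

/-- A nonnegative scalar multiple of a PSD real matrix is PSD. -/
lemma psd_smul_aux {n : ℕ} {K : Matrix (Fin n) (Fin n) ℝ} (hK : K.PosSemidef)
    {c : ℝ} (hc : 0 ≤ c) : (c • K).PosSemidef := by
  refine ⟨?_, fun x => ?_⟩
  · unfold Matrix.IsHermitian
    rw [conjTranspose_smul, hK.1]
    simp
  · exact (hK.smul hc).2 x

/-- Proposition 2 (KL convergence of NExt-LMM): if the approximated GSMs `K_m`
converge entrywise to `K`, then the closed-form Gaussian KL divergence `D_m`
between `N(Xβ̃_m, Σ_m)` and `N(Xβ̂, Σ)` tends to `0`. -/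
theorem stmt_14 (n p : ℕ)
    (K : Matrix (Fin n) (Fin n) ℝ) (hK : K.PosSemidef)
    (lam : ℝ) (hlam : 0 < lam)
    (X : Matrix (Fin n) (Fin p) ℝ) (y : Fin n → ℝ)
    (hG : IsUnit (Xᵀ * (lam • K + 1)⁻¹ * X))
    (betaHat : Fin p → ℝ)
    (hbetaHat : betaHat =
      (Xᵀ * (lam • K + 1)⁻¹ * X)⁻¹ *ᵥ (Xᵀ *ᵥ ((lam • K + 1)⁻¹ *ᵥ y)))
    (Km : ℕ → Matrix (Fin n) (Fin n) ℝ) (hKm : ∀ m, (Km m).PosSemidef)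
    (hconv : ∀ i j, Tendsto (fun m => Km m i j) atTop (𝓝 (K i j)))
    (betaM : ℕ → Fin p → ℝ)
    (hbetaM : ∀ m, betaM m =
      (Xᵀ * (lam • Km m + 1)⁻¹ * X)⁻¹ *ᵥ (Xᵀ *ᵥ ((lam • Km m + 1)⁻¹ *ᵥ y)))
    (D : ℕ → ℝ)
    (hD : ∀ m, D m = (1 / 2) *
      (((lam • K + 1)⁻¹ * (lam • Km m + 1)).trace - (n : ℝ) +
        (X *ᵥ betaHat - X *ᵥ betaM m) ⬝ᵥ
          ((lam • K + 1)⁻¹ *ᵥ (X *ᵥ betaHat - X *ᵥ betaM m)) +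
        Real.log (lam • K + 1).det - Real.log (lam • Km m + 1).det)) :
    Tendsto D atTop (𝓝 0) := by
  -- Sigma is positive definite
  have hSpd : (lam • K + 1).PosDef :=
    Matrix.PosDef.posSemidef_add (psd_smul_aux hK hlam.le) Matrix.PosDef.one
  have hdetpos : 0 < (lam • K + 1).det := hSpd.det_pos
  have hdetUnit : IsUnit (lam • K + 1).det := hdetpos.ne'.isUnit
  -- entrywise convergence upgraded to matrix convergence
  have hKt : Tendsto Km atTop (𝓝 K) := by
    refine tendsto_pi_nhds.mpr ?_; intro i
    rw [tendsto_pi_nhds]; intro j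
    exact hconv i j
  -- Sigma_m → Σ
  have hSt : Tendsto (fun m => lam • Km m + 1) atTop (𝓝 (lam • K + 1)) := by
    have : Continuous fun A : Matrix (Fin n) (Fin n) ℝ => lam • A + 1 :=
      (continuous_id.const_smul lam).add continuous_const
    exact (this.tendsto K).comp hKt
  -- Sigma_m⁻¹ → Σ⁻¹
  have hinvCont : ContinuousAt Inv.inv (lam • K + 1) := by
    apply continuousAt_matrix_inv
    rw [Ring.inverse_eq_inv']
    exact continuousAt_inv₀ hdetpos.ne'
  have hSinvt : Tendsto (fun m => (lam • Km m + 1)⁻¹) atTop (𝓝 (lam • K + 1)⁻¹) :=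
    Filter.Tendsto.comp hinvCont hSt
  -- G_m → G
  have hGt : Tendsto (fun m => Xᵀ * (lam • Km m + 1)⁻¹ * X) atTop
      (𝓝 (Xᵀ * (lam • K + 1)⁻¹ * X)) := by
    have : Continuous fun A : Matrix (Fin n) (Fin n) ℝ => Xᵀ * A * X :=
      (continuous_const.matrix_mul continuous_id).matrix_mul continuous_const
    exact (this.tendsto _).comp hSinvt
  -- G_m⁻¹ → G⁻¹
  have hGdet : IsUnit (Xᵀ * (lam • K + 1)⁻¹ * X).det :=
    (Matrix.isUnit_iff_isUnit_det _).mp hG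
  have hGinvCont : ContinuousAt Inv.inv (Xᵀ * (lam • K + 1)⁻¹ * X) := by
    apply continuousAt_matrix_inv
    rw [Ring.inverse_eq_inv']
    exact continuousAt_inv₀ hGdet.ne_zero
  have hGinvt : Tendsto (fun m => (Xᵀ * (lam • Km m + 1)⁻¹ * X)⁻¹) atTop
      (𝓝 ((Xᵀ * (lam • K + 1)⁻¹ * X)⁻¹)) := Filter.Tendsto.comp hGinvCont hGt
  -- v_m → v
  have hvt : Tendsto (fun m => Xᵀ *ᵥ ((lam • Km m + 1)⁻¹ *ᵥ y)) atTop
      (𝓝 (Xᵀ *ᵥ ((lam • K + 1)⁻¹ *ᵥ y))) := by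
    have : Continuous fun A : Matrix (Fin n) (Fin n) ℝ => Xᵀ *ᵥ (A *ᵥ y) :=
      continuous_const.matrix_mulVec (continuous_id.matrix_mulVec continuous_const)
    exact (this.tendsto _).comp hSinvt
  -- β_m → β̂
  have hβt : Tendsto betaM atTop (𝓝 betaHat) := by
    have hmv : Continuous fun q : Matrix (Fin p) (Fin p) ℝ × (Fin p → ℝ) => q.1 *ᵥ q.2 :=
      continuous_fst.matrix_mulVec continuous_snd
    have := (hmv.tendsto ((Xᵀ * (lam • K + 1)⁻¹ * X)⁻¹,
        Xᵀ *ᵥ ((lam • K + 1)⁻¹ *ᵥ y))).comp (hGinvt.prodMk_nhds hvt)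
    rw [hbetaHat]
    convert this using 1
    funext m
    simp [hbetaM m, Function.comp]
  -- trace term
  have hT1 : Tendsto (fun m => ((lam • K + 1)⁻¹ * (lam • Km m + 1)).trace) atTop
      (𝓝 (n : ℝ)) := by
    have hc : Continuous fun A : Matrix (Fin n) (Fin n) ℝ =>
        ((lam • K + 1)⁻¹ * A).trace :=
      (continuous_const.matrix_mul continuous_id).matrix_trace
    have := (hc.tendsto (lam • K + 1)).comp hSt
    rwa [Matrix.nonsing_inv_mul _ hdetUnit, Matrix.trace_one, Fintype.card_fin] at this
  -- quadratic term
  have hQ : Tendsto (fun m => (X *ᵥ betaHat - X *ᵥ betaM m) ⬝ᵥ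
      ((lam • K + 1)⁻¹ *ᵥ (X *ᵥ betaHat - X *ᵥ betaM m))) atTop (𝓝 0) := by
    have hc : Continuous fun b : Fin p → ℝ => (X *ᵥ betaHat - X *ᵥ b) ⬝ᵥ
        ((lam • K + 1)⁻¹ *ᵥ (X *ᵥ betaHat - X *ᵥ b)) := by
      have hd : Continuous fun b : Fin p → ℝ => X *ᵥ betaHat - X *ᵥ b :=
        continuous_const.sub (continuous_const.matrix_mulVec continuous_id)
      exact hd.dotProduct (continuous_const.matrix_mulVec hd)
    have := (hc.tendsto betaHat).comp hβt
    simpa [Function.comp_def] using this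
  -- log det term
  have hL : Tendsto (fun m => Real.log (lam • Km m + 1).det) atTop
      (𝓝 (Real.log (lam • K + 1).det)) := by
    have hdt : Tendsto (fun m => (lam • Km m + 1).det) atTop (𝓝 (lam • K + 1).det) :=
      ((continuous_id.matrix_det).tendsto _).comp hSt
    exact Filter.Tendsto.comp (Real.continuousAt_log hdetpos.ne') hdt
  -- combine
  have hfinal := ((((hT1.sub_const (n : ℝ)).add hQ).add_const
      (Real.log (lam • K + 1).det)).sub hL).const_mul (1 / 2 : ℝ)
  have : ((1 : ℝ) / 2) * ((n : ℝ) - (n : ℝ) + 0 + Real.log (lam • K + 1).det -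
      Real.log (lam • K + 1).det) = 0 := by ring
  rw [this] at hfinal
  convert hfinal using 1
  funext m
  rw [hD m]
end
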